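/- The complementary error function erfc has no zeros in the set S = {z ∈ ℂ \ {0} : |Arg z| ≥ 3π/4}. -/

import Mathlib

open Complex MeasureTheory

/-- The error function, `erf z = (2/√π) ∫₀^z e^{-u²} du`, integrated along the
segment from `0` to `z` (the integrand is entire, so the path is immaterial). -/
noncomputable def erf (z : ℂ) : ℂ :=
  (2 / Real.sqrt Real.pi : ℝ) * ∫ t in (0:ℝ)..1, z * Complex.exp (-((t : ℂ) * z) ^ 2)

/-- The complementary error function, `erfc z = (2/√π) ∫_z^∞ e^{-u²} du`,
integrated along the horizontal ray from `z` to `+∞`. -/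
noncomputable def erfc (z : ℂ) : ℂ :=
  (2 / Real.sqrt Real.pi : ℝ) * ∫ t in Set.Ioi (0:ℝ), Complex.exp (-(z + (t : ℂ)) ^ 2)

theorem erfc_ne_zero (z : ℂ) (hz : z ≠ 0) (harg : 3 * Real.pi / 4 ≤ |z.arg|) :
    erfc z ≠ 0 := by
  have hπ : 0 < Real.pi := Real.pi_pos
  have hsπ : 0 < Real.sqrt Real.pi := Real.sqrt_pos.mpr hπ
  set x := z.re with hxdef
  set y := z.im with hydef
  -- basic facts from the argument condition
  have hr : 0 < ‖z‖ := norm_pos_iff.mpr hz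
  have hcos : Real.cos z.arg ≤ -(Real.sqrt 2 / 2) := by
    have h1 : Real.cos |z.arg| ≤ Real.cos (3 * Real.pi / 4) := by
      apply Real.cos_le_cos_of_nonneg_of_le_pi (by positivity) (Complex.abs_arg_le_pi z) harg
    have h2 : Real.cos (3 * Real.pi / 4) = -(Real.sqrt 2 / 2) := by
      have : (3 : ℝ) * Real.pi / 4 = Real.pi - Real.pi / 4 := by ring
      rw [this, Real.cos_pi_sub, Real.cos_pi_div_four]
    rwa [Real.cos_abs, h2] at h1
  have hc2 : (1 : ℝ) / 2 ≤ (Real.cos z.arg) ^ 2 := by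
    have h2 : (Real.sqrt 2) ^ 2 = 2 := Real.sq_sqrt (by norm_num)
    nlinarith [Real.sqrt_nonneg 2]
  have hxr : x = ‖z‖ * Real.cos z.arg := by
    rw [Complex.cos_arg hz]; field_simp; exact hxdef
  have hyr : y = ‖z‖ * Real.sin z.arg := by
    rw [Complex.sin_arg]; field_simp; exact hydef
  have hsc : Real.sin z.arg ^ 2 + Real.cos z.arg ^ 2 = 1 := Real.sin_sq_add_cos_sq _
  have hx : x ≤ 0 := by
    rw [hxr]
    apply mul_nonpos_of_nonneg_of_nonpos hr.le
    nlinarith [Real.sqrt_nonneg 2, Real.sq_sqrt (show (0:ℝ) ≤ 2 by norm_num)]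
  have hxy : y ^ 2 ≤ x ^ 2 := by
    rw [hxr, hyr]
    have : Real.sin z.arg ^ 2 ≤ Real.cos z.arg ^ 2 := by nlinarith
    nlinarith [sq_nonneg ‖z‖]
  -- pointwise norm of the integrand
  have hnorm : ∀ t : ℝ, ‖Complex.exp (-(z + (t : ℂ)) ^ 2)‖
      = Real.exp (y ^ 2 - (x + t) ^ 2) := by
    intro t
    rw [Complex.norm_exp]
    congr 1
    simp only [pow_two, neg_re, Complex.mul_re, Complex.add_re, Complex.add_im,
      Complex.ofReal_re, Complex.ofReal_im, ← hxdef, ← hydef]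
    ring
  -- rewrite the integrand in Gaussian normal form
  have hform : ∀ t : ℝ, (-(z + (t : ℂ)) ^ 2)
      = -1 * ((((t + x : ℝ) : ℂ)) + (y : ℂ) * I) ^ 2 := by
    intro t
    rw [← Complex.re_add_im z]
    push_cast
    ring
  have hb : (0 : ℝ) < (1 : ℂ).re := by simp
  -- integrability over ℝ
  have hint : Integrable (fun t : ℝ => Complex.exp (-(z + (t : ℂ)) ^ 2)) := by
    have h0 := (GaussianFourier.integrable_cexp_neg_mul_sq_add_real_mul_I hb y).comp_add_right x
    exact h0.congr (Filter.Eventually.of_forall fun t =>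
      congrArg Complex.exp (hform t).symm)
  -- the full Gaussian integral equals √π
  have hfull : ∫ t : ℝ, Complex.exp (-(z + (t : ℂ)) ^ 2) = (Real.sqrt Real.pi : ℂ) := by
    have h1 : (∫ t : ℝ, Complex.exp (-(z + (t : ℂ)) ^ 2))
        = ∫ t : ℝ, Complex.exp (-1 * (((t : ℂ) + (x : ℂ)) + (y : ℂ) * I) ^ 2) := by
      congr 1; funext t; rw [hform t]; push_cast; ring_nf
    have h2 : (∫ t : ℝ, Complex.exp (-1 * (((t : ℂ) + (x : ℂ)) + (y : ℂ) * I) ^ 2))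
        = ∫ t : ℝ, Complex.exp (-1 * (((t : ℂ)) + (y : ℂ) * I) ^ 2) := by
      have := integral_add_right_eq_self (μ := volume)
        (fun t : ℝ => Complex.exp (-1 * (((t : ℂ)) + (y : ℂ) * I) ^ 2)) x
      rw [← this]
      congr 1; funext t; push_cast; ring_nf
    have h3 := GaussianFourier.integral_cexp_neg_mul_sq_add_real_mul_I hb y
    rw [h1, h2, h3, div_one]
    have h4 : ((Real.sqrt Real.pi : ℝ) : ℂ) = (Real.pi : ℂ) ^ (1/2 : ℂ) := by
      rw [Real.sqrt_eq_rpow, Complex.ofReal_cpow hπ.le]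
      norm_num
    rw [h4]
  -- the integral over `Iic 0` is small
  have hbound : ‖∫ t in Set.Iic (0:ℝ), Complex.exp (-(z + (t : ℂ)) ^ 2)‖
      ≤ Real.sqrt Real.pi / 2 := by
    have hgint : IntegrableOn (fun t : ℝ => Real.exp (-t ^ 2)) (Set.Iic (0:ℝ)) := by
      have : Integrable (fun t : ℝ => Real.exp (-1 * t ^ 2)) :=
        integrable_exp_neg_mul_sq one_pos
      exact (this.congr (Filter.Eventually.of_forall fun t => by ring_nf)).integrableOn
    have hle : ‖∫ t in Set.Iic (0:ℝ), Complex.exp (-(z + (t : ℂ)) ^ 2)‖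
        ≤ ∫ t in Set.Iic (0:ℝ), Real.exp (-t ^ 2) := by
      refine norm_integral_le_of_norm_le hgint ?_
      filter_upwards [ae_restrict_mem measurableSet_Iic] with t ht
      rw [hnorm t]
      apply Real.exp_le_exp.mpr
      have h2xt : 0 ≤ (-x) * (-t) := mul_nonneg (neg_nonneg.2 hx) (neg_nonneg.2 ht)
      nlinarith
    have heq : ∫ t in Set.Iic (0:ℝ), Real.exp (-t ^ 2) = Real.sqrt Real.pi / 2 := by
      have h1 : ∫ t in Set.Iic (0:ℝ), Real.exp (-t ^ 2)
          = ∫ t in Set.Ioi (-(0:ℝ)), Real.exp (-t ^ 2) := by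
        rw [← integral_comp_neg_Iic]
        congr 1; funext t; rw [neg_sq]
      have h2 := integral_gaussian_Ioi (1 : ℝ)
      rw [h1, neg_zero]
      rw [show (∫ t in Set.Ioi (0:ℝ), Real.exp (-t ^ 2))
          = ∫ t in Set.Ioi (0:ℝ), Real.exp (-1 * t ^ 2) by congr 1; funext t; ring_nf]
      rw [h2, div_one]
    linarith [hle, heq.le, heq.ge]
  -- split the full integral
  have hsplit : (∫ t in Set.Iic (0:ℝ), Complex.exp (-(z + (t : ℂ)) ^ 2))
      + (∫ t in Set.Ioi (0:ℝ), Complex.exp (-(z + (t : ℂ)) ^ 2))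
      = (Real.sqrt Real.pi : ℂ) := by
    rw [← hfull]
    exact intervalIntegral.integral_Iic_add_Ioi hint.integrableOn hint.integrableOn
  -- conclude
  intro h0
  have h1 : (∫ t in Set.Ioi (0:ℝ), Complex.exp (-(z + (t : ℂ)) ^ 2)) = 0 := by
    have h2 : ((2 / Real.sqrt Real.pi : ℝ) : ℂ) ≠ 0 := by
      simp only [ne_eq, Complex.ofReal_eq_zero]
      positivity
    exact (mul_eq_zero.mp h0).resolve_left h2
  rw [h1, add_zero] at hsplit
  have h3 : ‖(Real.sqrt Real.pi : ℂ)‖ ≤ Real.sqrt Real.pi / 2 := hsplit ▸ hbound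
  rw [Complex.norm_real, Real.norm_eq_abs, abs_of_pos hsπ] at h3
  linarith
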